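/- Let δ > 0, let s be a permutation of {1,…,g}, and let r, r′ be integers with 1 ≤ r′ ≤ g+1, r ∈ {r′−1, r′} and 0 ≤ r ≤ g. Set m = 𝕀_{s(1)} + ⋯ + 𝕀_{s(r)} (with m = 0 if r = 0). If Z ∈ D_m (fundamental region for K), then Z − δ r′ e_1 ∈ D̃_m (fundamental region for K̃ = K + δJ). -/

import Mathlib

open Matrix Finset

noncomputable section

namespace TropToda

variable (g : ℕ)

/-- The summand `(1/2) m K mᵀ + m Zᵀ` in the definition of the tropical theta function. -/
def thetaTerm (K : Matrix (Fin g) (Fin g) ℝ) (m : Fin g → ℤ) (Z : Fin g → ℝ) : ℝ :=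
  (1/2) * (Matrix.vecMul (fun i => (m i : ℝ)) K ⬝ᵥ fun i => (m i : ℝ))
    + (fun i => (m i : ℝ)) ⬝ᵥ Z

/-- The tropical Riemann theta function associated with `K`. -/
def theta (K : Matrix (Fin g) (Fin g) ℝ) (Z : Fin g → ℝ) : ℝ :=
  sInf (Set.range fun m : Fin g → ℤ => thetaTerm g K m Z)

/-- The fundamental region `D_m`. -/
def Dset (K : Matrix (Fin g) (Fin g) ℝ) (m : Fin g → ℤ) : Set (Fin g → ℝ) :=
  {Z | theta g K Z = thetaTerm g K m Z}

/-- The generic condition on `C = (C_{-1}, C_0, …, C_g)`. -/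
def Generic (C : ℤ → ℝ) : Prop :=
  C (-1) > 2 * C 0 ∧
  (∀ i : ℤ, 0 ≤ i → i ≤ (g : ℤ) - 2 → C i + C (i + 2) > 2 * C (i + 1)) ∧
  C ((g : ℤ) - 1) > 2 * C (g : ℤ)

/-- `L = C_{-1} − 2(g+1) C_g`. -/
def Lc (C : ℤ → ℝ) : ℝ := C (-1) - 2 * (g + 1) * C (g : ℤ)

/-- `λ_0 = C_g`, `λ_i = C_{g−i} − C_{g−i+1}` for `1 ≤ i ≤ g`. -/
def lam (C : ℤ → ℝ) (i : ℕ) : ℝ :=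
  if i = 0 then C (g : ℤ) else C ((g : ℤ) - i) - C ((g : ℤ) - i + 1)

/-- `p_0 = L`, `p_i = L − 2 ∑_{j=1}^g min(λ_i − λ_0, λ_j − λ_0)`. -/
def pc (C : ℤ → ℝ) (i : ℕ) : ℝ :=
  if i = 0 then Lc g C
  else Lc g C - 2 * ∑ j ∈ Finset.Icc 1 g,
    min (lam g C i - lam g C 0) (lam g C j - lam g C 0)

/-- The tridiagonal period matrix `K` (0-based index `a` corresponds to the paper's `a+1`). -/
def Kmat (C : ℤ → ℝ) : Matrix (Fin g) (Fin g) ℝ := fun a b =>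
  if a = b then
    pc g C (a : ℕ) + pc g C ((a : ℕ) + 1) + 2 * (lam g C ((a : ℕ) + 1) - lam g C (a : ℕ))
  else if (a : ℕ) + 1 = (b : ℕ) then -(pc g C ((a : ℕ) + 1))
  else if (b : ℕ) + 1 = (a : ℕ) then -(pc g C ((b : ℕ) + 1))
  else 0

/-- The first standard basis (row) vector `e_1`. -/
def e1 : Fin g → ℝ := fun i => if (i : ℕ) = 0 then 1 else 0

/-- `λ⃗ = (λ_1 − λ_0, …, λ_g − λ_{g−1})`. -/
def lamvec (C : ℤ → ℝ) : Fin g → ℝ := fun i => lam g C ((i : ℕ) + 1) - lam g C (i : ℕ)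

/-- `Z_n^t = Z_0 − nL e_1 + t λ⃗`. -/
def Zpt (C : ℤ → ℝ) (Z0 : Fin g → ℝ) (n t : ℤ) : Fin g → ℝ :=
  fun i => Z0 i - (n : ℝ) * Lc g C * e1 g i + (t : ℝ) * lamvec g C i

/-- `T_n^t = Θ(Z_n^t)`. -/
def Tf (C : ℤ → ℝ) (Z0 : Fin g → ℝ) (n t : ℤ) : ℝ :=
  theta g (Kmat g C) (Zpt g C Z0 n t)

/-- `Q_n^t = T_{n−1}^t + T_n^{t+1} − T_{n−1}^{t+1} − T_n^t + C_g`. -/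
def Qf (C : ℤ → ℝ) (Z0 : Fin g → ℝ) (n t : ℤ) : ℝ :=
  Tf g C Z0 (n - 1) t + Tf g C Z0 n (t + 1) - Tf g C Z0 (n - 1) (t + 1)
    - Tf g C Z0 n t + C (g : ℤ)

/-- `W_n^t = L + T_{n−1}^{t+1} + T_{n+1}^t − T_n^t − T_n^{t+1} + C_g`. -/
def Wf (C : ℤ → ℝ) (Z0 : Fin g → ℝ) (n t : ℤ) : ℝ :=
  Lc g C + Tf g C Z0 (n - 1) (t + 1) + Tf g C Z0 (n + 1) t - Tf g C Z0 n t
    - Tf g C Z0 n (t + 1) + C (g : ℤ)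

/-- `σ_t ∘ ι_t : ℝ^g → ℝ^{2(g+1)}`, recording `(Q_n^t, W_n^t)_{n ∈ ℤ/(g+1)ℤ}`. -/
def sigmaIota (C : ℤ → ℝ) (t : ℤ) (Z0 : Fin g → ℝ) :
    (ZMod (g + 1) → ℝ) × (ZMod (g + 1) → ℝ) :=
  (fun n => Qf g C Z0 (n.val : ℤ) t, fun n => Wf g C Z0 (n.val : ℤ) t)

/-- The tridiagonal matrix `J` with `2` on the diagonal and `−1` off it. -/
def Jmat : Matrix (Fin g) (Fin g) ℝ := fun a b =>
  if a = b then 2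
  else if (a : ℕ) + 1 = (b : ℕ) then -1
  else if (b : ℕ) + 1 = (a : ℕ) then -1
  else 0

/-- `X_n = min_{k=0,…,g} ∑_{l=1}^k (W_{n−l} − Q_{n−l})`, indices mod `g+1`. -/
def todaX (Q W : ZMod (g + 1) → ℝ) (n : ZMod (g + 1)) : ℝ :=
  ⨅ k : Fin (g + 1), ∑ l ∈ Finset.Icc 1 (k : ℕ),
    (W (n - (l : ZMod (g + 1))) - Q (n - (l : ZMod (g + 1))))

/-- The ultra-discrete periodic Toda evolution map. -/
def todaMap (QW : (ZMod (g + 1) → ℝ) × (ZMod (g + 1) → ℝ)) :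
    (ZMod (g + 1) → ℝ) × (ZMod (g + 1) → ℝ) :=
  (fun n => min (QW.2 n) (QW.1 n - todaX g QW.1 QW.2 n),
   fun n => QW.1 (n + 1) + QW.2 n - min (QW.2 n) (QW.1 n - todaX g QW.1 QW.2 n))

/-- `Z̃_n^t = Z_{n_0}^0 − (n − n_0)(L + δ) e_1 + t λ⃗`. -/
def Ztil (C : ℤ → ℝ) (Z0 : Fin g → ℝ) (n0 : ℤ) (δ : ℝ) (n t : ℤ) : Fin g → ℝ :=
  fun i => Zpt g C Z0 n0 0 i - ((n : ℝ) - (n0 : ℝ)) * (Lc g C + δ) * e1 g i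
    + (t : ℝ) * lamvec g C i

/-- The theta function `Θ̃` associated with `K̃ = K + δJ`. -/
def thetaTil (C : ℤ → ℝ) (δ : ℝ) (Z : Fin g → ℝ) : ℝ :=
  theta g (Kmat g C + δ • Jmat g) Z

/-- `Q̃_n`. -/
def Qtil (C : ℤ → ℝ) (Z0 : Fin g → ℝ) (n0 : ℤ) (δ : ℝ) (n : ℤ) : ℝ :=
  thetaTil g C δ (Ztil g C Z0 n0 δ (n - 1) 0) + thetaTil g C δ (Ztil g C Z0 n0 δ n 1)
    - thetaTil g C δ (Ztil g C Z0 n0 δ (n - 1) 1) - thetaTil g C δ (Ztil g C Z0 n0 δ n 0)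

/-- `W̃_n`. -/
def Wtil (C : ℤ → ℝ) (Z0 : Fin g → ℝ) (n0 : ℤ) (δ : ℝ) (n : ℤ) : ℝ :=
  (Lc g C + δ) + thetaTil g C δ (Ztil g C Z0 n0 δ (n - 1) 1)
    + thetaTil g C δ (Ztil g C Z0 n0 δ (n + 1) 0)
    - thetaTil g C δ (Ztil g C Z0 n0 δ n 0) - thetaTil g C δ (Ztil g C Z0 n0 δ n 1)

end TropToda
namespace TropAux
open TropToda

variable {g : ℕ}

def ext (g : ℕ) (x : Fin g → ℝ) (k : ℕ) : ℝ := if h : k < g then x ⟨k, h⟩ else 0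

lemma ext_apply (x : Fin g → ℝ) (i : Fin g) : ext g x (i : ℕ) = x i := by
  simp [ext, i.isLt]

lemma ext_ge (x : Fin g → ℝ) {k : ℕ} (h : g ≤ k) : ext g x k = 0 := by
  simp [ext, Nat.not_lt.2 h]

lemma dot_eq (x y : Fin g → ℝ) : x ⬝ᵥ y = ∑ j ∈ Finset.range g, ext g x j * ext g y j := by
  rw [dotProduct, ← Fin.sum_univ_eq_sum_range (fun j => ext g x j * ext g y j) g]
  exact Finset.sum_congr rfl fun i _ => by rw [ext_apply, ext_apply]

lemma quad_tri (d e : ℕ → ℝ) (M : Matrix (Fin g) (Fin g) ℝ)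
    (hM : ∀ a b : Fin g, M a b = if (a:ℕ) = (b:ℕ) then d (a:ℕ)
      else if (a:ℕ)+1 = (b:ℕ) then e ((a:ℕ)+1)
      else if (b:ℕ)+1 = (a:ℕ) then e ((b:ℕ)+1) else 0)
    (x : Fin g → ℝ) :
    Matrix.vecMul x M ⬝ᵥ x = ∑ j ∈ Finset.range g, d j * ext g x j ^ 2
      + 2 * ∑ j ∈ Finset.range g, e (j+1) * (ext g x j * ext g x (j+1)) := by
  have hTfin : ∀ j k : Fin g, x j * M j k * x k
      = (if (j:ℕ) = (k:ℕ) then ext g x (j:ℕ) * d (j:ℕ) * ext g x (k:ℕ) else 0)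
        + (if (j:ℕ)+1 = (k:ℕ) then ext g x (j:ℕ) * e ((j:ℕ)+1) * ext g x (k:ℕ) else 0)
        + (if (k:ℕ)+1 = (j:ℕ) then ext g x (j:ℕ) * e ((k:ℕ)+1) * ext g x (k:ℕ) else 0) := by
    intro j k
    rw [hM, ← ext_apply x j, ← ext_apply x k]
    by_cases h1 : (j:ℕ) = (k:ℕ)
    · rw [if_pos h1, if_pos h1, if_neg (by omega : ¬((j:ℕ)+1 = (k:ℕ))),
        if_neg (by omega : ¬((k:ℕ)+1 = (j:ℕ)))]; ring
    · by_cases h2 : (j:ℕ)+1 = (k:ℕ)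
      · rw [if_neg h1, if_neg h1, if_pos h2, if_pos h2,
          if_neg (by omega : ¬((k:ℕ)+1 = (j:ℕ)))]; ring
      · by_cases h3 : (k:ℕ)+1 = (j:ℕ)
        · rw [if_neg h1, if_neg h1, if_neg h2, if_neg h2, if_pos h3, if_pos h3]; ring
        · rw [if_neg h1, if_neg h1, if_neg h2, if_neg h2, if_neg h3, if_neg h3]; ring
  have key : Matrix.vecMul x M ⬝ᵥ x = ∑ j ∈ Finset.range g, ∑ k ∈ Finset.range g,
      ((if j = k then ext g x j * d j * ext g x k else 0)
        + (if j+1 = k then ext g x j * e (j+1) * ext g x k else 0)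
        + (if k+1 = j then ext g x j * e (k+1) * ext g x k else 0)) := by
    have h1 : Matrix.vecMul x M ⬝ᵥ x = ∑ k : Fin g, ∑ j : Fin g, x j * M j k * x k := by
      simp [dotProduct, Matrix.vecMul, Finset.sum_mul]
    rw [h1, Finset.sum_comm]
    rw [← Fin.sum_univ_eq_sum_range (fun j => ∑ k ∈ Finset.range g,
      ((if j = k then ext g x j * d j * ext g x k else 0)
        + (if j+1 = k then ext g x j * e (j+1) * ext g x k else 0)
        + (if k+1 = j then ext g x j * e (k+1) * ext g x k else 0))) g]
    refine Finset.sum_congr rfl fun j _ => ?_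
    rw [← Fin.sum_univ_eq_sum_range (fun k =>
      ((if (j:ℕ) = k then ext g x (j:ℕ) * d (j:ℕ) * ext g x k else 0)
        + (if (j:ℕ)+1 = k then ext g x (j:ℕ) * e ((j:ℕ)+1) * ext g x k else 0)
        + (if k+1 = (j:ℕ) then ext g x (j:ℕ) * e (k+1) * ext g x k else 0))) g]
    exact Finset.sum_congr rfl fun k _ => hTfin j k
  rw [key]
  have hsplit : ∀ j ∈ Finset.range g,
      (∑ k ∈ Finset.range g,
      ((if j = k then ext g x j * d j * ext g x k else 0)
        + (if j+1 = k then ext g x j * e (j+1) * ext g x k else 0)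
        + (if k+1 = j then ext g x j * e (k+1) * ext g x k else 0)))
      = d j * ext g x j ^ 2 + e (j+1) * (ext g x j * ext g x (j+1))
        + ∑ k ∈ Finset.range g, (if k+1 = j then ext g x j * e (k+1) * ext g x k else 0) := by
    intro j hj
    rw [Finset.sum_add_distrib, Finset.sum_add_distrib]
    congr 2
    · rw [Finset.sum_ite_eq, if_pos hj]; ring
    · rw [Finset.sum_ite_eq]
      by_cases h : j + 1 ∈ Finset.range g
      · rw [if_pos h]; ring
      · rw [if_neg h]
        have hge : g ≤ j + 1 := by
          by_contra hc; exact h (Finset.mem_range.2 (by omega))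
        rw [ext_ge x hge]; ring
  rw [Finset.sum_congr rfl hsplit, Finset.sum_add_distrib, Finset.sum_add_distrib]
  have hlast : ∑ j ∈ Finset.range g, ∑ k ∈ Finset.range g,
      (if k+1 = j then ext g x j * e (k+1) * ext g x k else 0)
      = ∑ k ∈ Finset.range g, e (k+1) * (ext g x k * ext g x (k+1)) := by
    rw [Finset.sum_comm]
    refine Finset.sum_congr rfl fun k _ => ?_
    rw [Finset.sum_ite_eq]
    by_cases h : k + 1 ∈ Finset.range g
    · rw [if_pos h]; ring
    · rw [if_neg h]
      have hge : g ≤ k + 1 := by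
        by_contra hc; exact h (Finset.mem_range.2 (by omega))
      rw [ext_ge x hge]; ring
  rw [hlast]
  have h2 : ∑ j ∈ Finset.range g, e (j+1) * (ext g x j * ext g x (j+1))
      = ∑ k ∈ Finset.range g, e (k+1) * (ext g x k * ext g x (k+1)) := rfl
  ring

end TropAux
namespace TropAux
open TropToda

variable {g : ℕ}

lemma sum_shift (f : ℕ → ℝ) (hf : f g = 0) :
    ∑ j ∈ Finset.range g, f (j+1) = ∑ j ∈ Finset.range g, f j - f 0 := by
  have h1 := Finset.sum_range_succ' f g
  rw [Finset.sum_range_succ f g] at h1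
  linarith

lemma quad_tri_sq (p q : ℕ → ℝ) (M : Matrix (Fin g) (Fin g) ℝ)
    (hM : ∀ a b : Fin g, M a b = if (a:ℕ) = (b:ℕ) then p (a:ℕ) + p ((a:ℕ)+1) + q (a:ℕ)
      else if (a:ℕ)+1 = (b:ℕ) then -p ((a:ℕ)+1)
      else if (b:ℕ)+1 = (a:ℕ) then -p ((b:ℕ)+1) else 0)
    (x : Fin g → ℝ) :
    Matrix.vecMul x M ⬝ᵥ x = p 0 * ext g x 0 ^ 2
      + ∑ j ∈ Finset.range g, p (j+1) * (ext g x j - ext g x (j+1)) ^ 2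
      + ∑ j ∈ Finset.range g, q j * ext g x j ^ 2 := by
  rw [quad_tri (fun a => p a + p (a+1) + q a) (fun a => -p a) M hM x]
  have hshift : ∑ j ∈ Finset.range g, p (j+1) * ext g x (j+1) ^ 2
      = ∑ j ∈ Finset.range g, p j * ext g x j ^ 2 - p 0 * ext g x 0 ^ 2 :=
    sum_shift (fun j => p j * ext g x j ^ 2)
      (by show p g * ext g x g ^ 2 = 0; rw [ext_ge x le_rfl]; ring)
  have hexp : ∑ j ∈ Finset.range g, p (j+1) * (ext g x j - ext g x (j+1)) ^ 2
      = ∑ j ∈ Finset.range g, p (j+1) * ext g x j ^ 2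
        - 2 * ∑ j ∈ Finset.range g, p (j+1) * (ext g x j * ext g x (j+1))
        + ∑ j ∈ Finset.range g, p (j+1) * ext g x (j+1) ^ 2 := by
    rw [Finset.mul_sum, ← Finset.sum_sub_distrib, ← Finset.sum_add_distrib]
    exact Finset.sum_congr rfl fun j _ => by ring
  have hD : ∑ j ∈ Finset.range g, (p j + p (j+1) + q j) * ext g x j ^ 2
      = ∑ j ∈ Finset.range g, p j * ext g x j ^ 2
        + ∑ j ∈ Finset.range g, p (j+1) * ext g x j ^ 2
        + ∑ j ∈ Finset.range g, q j * ext g x j ^ 2 := by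
    rw [← Finset.sum_add_distrib, ← Finset.sum_add_distrib]
    exact Finset.sum_congr rfl fun j _ => by ring
  have hE : ∑ j ∈ Finset.range g, -p (j+1) * (ext g x j * ext g x (j+1))
      = -∑ j ∈ Finset.range g, p (j+1) * (ext g x j * ext g x (j+1)) := by
    rw [← Finset.sum_neg_distrib]
    exact Finset.sum_congr rfl fun j _ => by ring
  rw [hD, hE]
  linarith [hexp, hshift]

end TropAux
namespace TropAux
open TropToda

variable {g : ℕ}

lemma quadJ (x : Fin g → ℝ) :
    Matrix.vecMul x (Jmat g) ⬝ᵥ x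
      = ext g x 0 ^ 2 + ∑ j ∈ Finset.range g, (ext g x j - ext g x (j+1)) ^ 2 := by
  have h := quad_tri_sq (fun _ => (1:ℝ)) (fun _ => (0:ℝ)) (Jmat g) (fun a b => by
    rw [Jmat]
    by_cases h : a = b
    · subst h; rw [if_pos rfl, if_pos rfl]; norm_num
    · have h' : ¬((a:ℕ) = (b:ℕ)) := fun hh => h (Fin.ext hh)
      rw [if_neg h, if_neg h']) x
  simpa using h

lemma quadK (C : ℤ → ℝ) (x : Fin g → ℝ) :
    Matrix.vecMul x (Kmat g C) ⬝ᵥ x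
      = pc g C 0 * ext g x 0 ^ 2
        + ∑ j ∈ Finset.range g, pc g C (j+1) * (ext g x j - ext g x (j+1)) ^ 2
        + ∑ j ∈ Finset.range g, (2 * (lam g C (j+1) - lam g C j)) * ext g x j ^ 2 :=
  quad_tri_sq (pc g C) (fun j => 2 * (lam g C (j+1) - lam g C j)) (Kmat g C) (fun a b => by
    rw [Kmat]
    by_cases h : a = b
    · subst h; rw [if_pos rfl, if_pos rfl]
    · have h' : ¬((a:ℕ) = (b:ℕ)) := fun hh => h (Fin.ext hh)
      rw [if_neg h, if_neg h']) x

lemma quadKJ (C : ℤ → ℝ) (δ : ℝ) (x : Fin g → ℝ) :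
    Matrix.vecMul x (Kmat g C + δ • Jmat g) ⬝ᵥ x
      = Matrix.vecMul x (Kmat g C) ⬝ᵥ x + δ * (Matrix.vecMul x (Jmat g) ⬝ᵥ x) := by
  rw [quadK, quadJ]
  rw [quad_tri_sq (fun j => pc g C j + δ) (fun j => 2 * (lam g C (j+1) - lam g C j))
    (Kmat g C + δ • Jmat g) (fun a b => by
      rw [Matrix.add_apply, Matrix.smul_apply, Kmat, Jmat, smul_eq_mul]
      by_cases h : a = b
      · subst h; rw [if_pos rfl, if_pos rfl, if_pos rfl]; ring
      · have h' : ¬((a:ℕ) = (b:ℕ)) := fun hh => h (Fin.ext hh)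
        rw [if_neg h, if_neg h, if_neg h']
        by_cases h2 : (a:ℕ)+1 = (b:ℕ)
        · rw [if_pos h2, if_pos h2, if_pos h2]; ring
        · rw [if_neg h2, if_neg h2, if_neg h2]
          by_cases h3 : (b:ℕ)+1 = (a:ℕ)
          · rw [if_pos h3, if_pos h3, if_pos h3]; ring
          · rw [if_neg h3, if_neg h3, if_neg h3]; ring) x]
  have h1 : ∑ j ∈ Finset.range g, (pc g C (j+1) + δ) * (ext g x j - ext g x (j+1)) ^ 2
      = ∑ j ∈ Finset.range g, pc g C (j+1) * (ext g x j - ext g x (j+1)) ^ 2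
        + δ * ∑ j ∈ Finset.range g, (ext g x j - ext g x (j+1)) ^ 2 := by
    rw [Finset.mul_sum, ← Finset.sum_add_distrib]
    exact Finset.sum_congr rfl fun j _ => by ring
  rw [h1]; ring

end TropAux
namespace TropAux
open TropToda

variable {g : ℕ}

lemma lam_succ_pos {C : ℤ → ℝ} (hC : Generic g C) {k : ℕ} (hk : k < g) :
    0 < lam g C (k+1) - lam g C k := by
  obtain ⟨h1, h2, h3⟩ := hC
  rcases Nat.eq_zero_or_pos k with hk0 | hkpos
  · subst hk0
    have e1 : lam g C 1 = C ((g:ℤ) - 1) - C (g:ℤ) := by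
      rw [lam, if_neg one_ne_zero]
      norm_num
    have e0 : lam g C 0 = C (g:ℤ) := by rw [lam, if_pos rfl]
    rw [e1, e0]; linarith
  · have hi0 : (0:ℤ) ≤ (g:ℤ) - ((k:ℤ)+1) := by omega
    have hi2 : (g:ℤ) - ((k:ℤ)+1) ≤ (g:ℤ) - 2 := by omega
    have hgen := h2 ((g:ℤ) - ((k:ℤ)+1)) hi0 hi2
    have ek1 : lam g C (k+1) = C ((g:ℤ) - ((k:ℤ)+1)) - C ((g:ℤ) - ((k:ℤ)+1) + 1) := by
      rw [lam, if_neg (Nat.succ_ne_zero k)]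
      norm_num
    have ek : lam g C k = C ((g:ℤ) - (k:ℤ)) - C ((g:ℤ) - (k:ℤ) + 1) := by
      rw [lam, if_neg (by omega : k ≠ 0)]
    have c1 : (g:ℤ) - ((k:ℤ)+1) + 1 = (g:ℤ) - (k:ℤ) := by ring
    have c2 : (g:ℤ) - ((k:ℤ)+1) + 2 = (g:ℤ) - (k:ℤ) + 1 := by ring
    rw [c1, c2] at hgen
    rw [ek1, ek, c1]; linarith

lemma lam_ge_lam0 {C : ℤ → ℝ} (hC : Generic g C) {j : ℕ} (hj : j ≤ g) :
    lam g C 0 ≤ lam g C j := by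
  have h := Finset.sum_range_sub (lam g C) j
  have hnn : 0 ≤ ∑ i ∈ Finset.range j, (lam g C (i+1) - lam g C i) :=
    Finset.sum_nonneg fun i hi => (lam_succ_pos hC (by
      have := Finset.mem_range.1 hi; omega)).le
  linarith

lemma sum_lam (C : ℤ → ℝ) : ∑ j ∈ Finset.Icc 1 g, lam g C j = C 0 - C (g:ℤ) := by
  rw [← Finset.Ico_add_one_right_eq_Icc, Finset.sum_Ico_eq_sum_range]
  have hc : ∀ k, lam g C (1+k)
      = (fun t : ℕ => C ((g:ℤ) - (t:ℤ))) (k+1) - (fun t : ℕ => C ((g:ℤ) - (t:ℤ))) k := by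
    intro k
    rw [lam, if_neg (by omega : 1 + k ≠ 0)]
    push_cast
    ring_nf
  rw [show g + 1 - 1 = g from rfl, Finset.sum_congr rfl fun k _ => hc k,
    Finset.sum_range_sub (fun t : ℕ => C ((g:ℤ) - (t:ℤ))) g]
  norm_num

lemma sum_lam_sub (C : ℤ → ℝ) :
    ∑ j ∈ Finset.Icc 1 g, (lam g C j - lam g C 0) = C 0 - ((g:ℝ)+1) * C (g:ℤ) := by
  rw [Finset.sum_sub_distrib, sum_lam, Finset.sum_const, Nat.card_Icc]
  rw [show lam g C 0 = C (g:ℤ) from by rw [lam, if_pos rfl]]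
  simp only [nsmul_eq_mul, Nat.add_sub_cancel]
  ring

lemma pc_pos {C : ℤ → ℝ} (hC : Generic g C) (i : ℕ) : 0 < pc g C i := by
  obtain ⟨h1, h2, h3⟩ := hC
  have hsum := sum_lam_sub (g := g) C
  rcases Nat.eq_zero_or_pos i with hi0 | hip
  · subst hi0
    rw [pc, if_pos rfl, Lc]
    have hnn : 0 ≤ ∑ j ∈ Finset.Icc 1 g, (lam g C j - lam g C 0) :=
      Finset.sum_nonneg fun j hj => by
        have hjg : j ≤ g := (Finset.mem_Icc.1 hj).2
        linarith [lam_ge_lam0 ⟨h1, h2, h3⟩ hjg]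
    rw [hsum] at hnn
    linarith
  · rw [pc, if_neg (by omega : i ≠ 0), Lc]
    have hle : ∑ j ∈ Finset.Icc 1 g, min (lam g C i - lam g C 0) (lam g C j - lam g C 0)
        ≤ ∑ j ∈ Finset.Icc 1 g, (lam g C j - lam g C 0) :=
      Finset.sum_le_sum fun j _ => min_le_right _ _
    rw [hsum] at hle
    linarith

end TropAux
namespace TropAux
open TropToda

variable {g : ℕ}

lemma aux_quad_bound {c z x : ℝ} (hc : 0 < c) : -(z^2 / (4*c)) ≤ c * x^2 + x * z := by
  have h4 : (0:ℝ) < 4*c := by linarith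
  rw [← neg_div, div_le_iff₀ h4]
  nlinarith [sq_nonneg (2*c*x + z)]

lemma thetaTerm_lb {C : ℤ → ℝ} (hC : Generic g C) (Z : Fin g → ℝ) (n : Fin g → ℤ) :
    -∑ j ∈ Finset.range g, (ext g Z j)^2 / (4 * (lam g C (j+1) - lam g C j))
      ≤ thetaTerm g (Kmat g C) n Z := by
  rw [thetaTerm, quadK, dot_eq]
  set x : Fin g → ℝ := fun i => ((n i : ℝ)) with hx
  have h1 : 0 ≤ pc g C 0 * ext g x 0 ^ 2 :=
    mul_nonneg (pc_pos hC 0).le (sq_nonneg _)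
  have h2 : 0 ≤ ∑ j ∈ Finset.range g, pc g C (j+1) * (ext g x j - ext g x (j+1)) ^ 2 :=
    Finset.sum_nonneg fun j _ => mul_nonneg (pc_pos hC (j+1)).le (sq_nonneg _)
  have h3 : ∑ j ∈ Finset.range g, (-(((ext g Z j)^2) / (4 * (lam g C (j+1) - lam g C j))))
      ≤ ∑ j ∈ Finset.range g,
        ((lam g C (j+1) - lam g C j) * ext g x j ^ 2 + ext g x j * ext g Z j) :=
    Finset.sum_le_sum fun j hj =>
      aux_quad_bound (lam_succ_pos hC (Finset.mem_range.1 hj))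
  rw [Finset.sum_neg_distrib] at h3
  have h4 : ∑ j ∈ Finset.range g,
      ((lam g C (j+1) - lam g C j) * ext g x j ^ 2 + ext g x j * ext g Z j)
      = ∑ j ∈ Finset.range g, (lam g C (j+1) - lam g C j) * ext g x j ^ 2
        + ∑ j ∈ Finset.range g, ext g x j * ext g Z j := Finset.sum_add_distrib
  have h5 : (1:ℝ)/2 * ∑ j ∈ Finset.range g, (2 * (lam g C (j+1) - lam g C j)) * ext g x j ^ 2
      = ∑ j ∈ Finset.range g, (lam g C (j+1) - lam g C j) * ext g x j ^ 2 := by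
    rw [Finset.mul_sum]
    exact Finset.sum_congr rfl fun j _ => by ring
  linarith

lemma thetaTerm_bdd {C : ℤ → ℝ} (hC : Generic g C) (Z : Fin g → ℝ) :
    BddBelow (Set.range fun n : Fin g → ℤ => thetaTerm g (Kmat g C) n Z) := by
  refine ⟨-∑ j ∈ Finset.range g, (ext g Z j)^2 / (4 * (lam g C (j+1) - lam g C j)), ?_⟩
  rintro y ⟨n, rfl⟩
  exact thetaTerm_lb hC Z n

lemma thetaTerm_mono {C : ℤ → ℝ} (hC : Generic g C) {Z : Fin g → ℝ} {m : Fin g → ℤ}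
    (hZ : theta g (Kmat g C) Z = thetaTerm g (Kmat g C) m Z) (n : Fin g → ℤ) :
    thetaTerm g (Kmat g C) m Z ≤ thetaTerm g (Kmat g C) n Z := by
  rw [← hZ]
  exact csInf_le (thetaTerm_bdd hC Z) ⟨n, rfl⟩

def extI (g : ℕ) (v : Fin g → ℤ) (k : ℕ) : ℤ := if h : k < g then v ⟨k, h⟩ else 0

lemma ext_intCast (v : Fin g → ℤ) (k : ℕ) :
    ext g (fun i => ((v i : ℝ))) k = ((extI g v k : ℤ) : ℝ) := by
  rw [ext, extI]
  split_ifs <;> simp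

lemma J_lower (v : Fin g → ℤ) :
    (ext g (fun i => ((v i : ℝ))) 0)^2 + ext g (fun i => ((v i : ℝ))) 0
      ≤ (ext g (fun i => ((v i : ℝ))) 0)^2
        + ∑ j ∈ Finset.range g,
          (ext g (fun i => ((v i : ℝ))) j - ext g (fun i => ((v i : ℝ))) (j+1))^2 := by
  set x : Fin g → ℝ := fun i => ((v i : ℝ)) with hx
  have htel : ∑ j ∈ Finset.range g, (ext g x j - ext g x (j+1)) = ext g x 0 :=
    by rw [Finset.sum_range_sub' (ext g x) g, ext_ge x le_rfl, sub_zero]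
  have hterm : ∀ j ∈ Finset.range g,
      (ext g x j - ext g x (j+1)) ≤ (ext g x j - ext g x (j+1))^2 := by
    intro j _
    have : ext g x j - ext g x (j+1) = ((extI g v j - extI g v (j+1) : ℤ) : ℝ) := by
      rw [hx, ext_intCast, ext_intCast]; push_cast; ring
    rw [this]
    exact_mod_cast Int.le_self_sq (extI g v j - extI g v (j+1))
  have := Finset.sum_le_sum hterm
  linarith [htel]

lemma consec_nonneg (k : ℤ) : (0:ℝ) ≤ (k:ℝ) * ((k:ℝ)+1) := by
  have h : 0 ≤ k * (k+1) := by
    rcases le_or_gt 0 k with h | h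
    · exact mul_nonneg h (by omega)
    · exact mul_nonneg_of_nonpos_of_nonpos (by omega) (by omega : k + 1 ≤ 0)
  exact_mod_cast h

end TropAux
namespace TropAux
open TropToda

variable {g : ℕ}

lemma card_filter_lt {t : ℕ} (ht : t ≤ g) :
    ((Finset.univ.filter fun j : Fin g => (j:ℕ) < t).card) = t := by
  have himg : (Finset.univ.filter fun j : Fin g => (j:ℕ) < t).image Fin.val
      = Finset.range t := by
    ext k
    simp only [Finset.mem_image, Finset.mem_filter, Finset.mem_univ, true_and,
      Finset.mem_range]
    constructor
    · rintro ⟨j, hj, rfl⟩; exact hj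
    · intro hk; exact ⟨⟨k, lt_of_lt_of_le hk ht⟩, hk, rfl⟩
  calc ((Finset.univ.filter fun j : Fin g => (j:ℕ) < t).card)
      = ((Finset.univ.filter fun j : Fin g => (j:ℕ) < t).image Fin.val).card :=
        (Finset.card_image_of_injective _ Fin.val_injective).symm
    _ = (Finset.range t).card := by rw [himg]
    _ = t := Finset.card_range t

lemma sum_e1 (hg : 0 < g) (x : Fin g → ℝ) :
    ∑ i : Fin g, x i * e1 g i = x ⟨0, hg⟩ := by
  rw [Finset.sum_eq_single (⟨0, hg⟩ : Fin g)]
  · rw [e1]; norm_num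
  · intro i _ hne
    have h0 : (i:ℕ) ≠ 0 := fun h => hne (Fin.ext h)
    rw [e1]; rw [if_neg h0, mul_zero]
  · intro h; exact absurd (Finset.mem_univ _) h

lemma ext_zero (hg : 0 < g) (x : Fin g → ℝ) : ext g x 0 = x ⟨0, hg⟩ := by
  rw [ext, dif_pos hg]

end TropAux

open TropAux

open TropToda in
/-- if `Z ∈ D_m` (for `K`) with `m = 𝕀_{s(1)} + ⋯ + 𝕀_{s(r)}`,
then `Z − δ r′ e_1 ∈ D̃_m` (for `K̃ = K + δJ`). -/
theorem shift_mem_Dtil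
    (g : ℕ) (hg : 0 < g) (C : ℤ → ℝ) (hC : Generic g C)
    (δ : ℝ) (hδ : 0 < δ) (s : Equiv.Perm (Fin g)) (r r' : ℤ)
    (hr'1 : 1 ≤ r') (hr'2 : r' ≤ (g : ℤ) + 1) (hr : r = r' - 1 ∨ r = r')
    (hr0 : 0 ≤ r) (hrg : r ≤ (g : ℤ))
    (m : Fin g → ℤ)
    (hm : m = fun i : Fin g =>
      ((Finset.univ.filter fun j : Fin g => ((j : ℕ) : ℤ) < r ∧ (i : ℕ) ≤ ((s j : Fin g) : ℕ)).card : ℤ))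
    (Z : Fin g → ℝ) (hZ : Z ∈ Dset g (Kmat g C) m) :
    (fun i => Z i - δ * (r' : ℝ) * e1 g i) ∈ Dset g (Kmat g C + δ • Jmat g) m := by
    classical
  simp only [Dset, Set.mem_setOf_eq] at hZ ⊢
  set Z' : Fin g → ℝ := fun i => Z i - δ * (r' : ℝ) * e1 g i with hZ'def
  -- key identity
  have hid : ∀ v : Fin g → ℤ,
      thetaTerm g (Kmat g C + δ • Jmat g) v Z'
        = thetaTerm g (Kmat g C) v Z
          + δ * ((1/2) * ((ext g (fun i => ((v i : ℝ))) 0)^2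
              + ∑ j ∈ Finset.range g, (ext g (fun i => ((v i : ℝ))) j
                  - ext g (fun i => ((v i : ℝ))) (j+1))^2)
            - (r' : ℝ) * ext g (fun i => ((v i : ℝ))) 0) := by
    intro v
    have hdot : (fun i => ((v i : ℝ))) ⬝ᵥ Z'
        = (fun i => ((v i : ℝ))) ⬝ᵥ Z - δ * (r' : ℝ) * ((v ⟨0, hg⟩ : ℝ)) := by
      rw [dotProduct, dotProduct]
      have hterm : ∀ i : Fin g, (v i : ℝ) * Z' i
          = (v i : ℝ) * Z i - δ * (r' : ℝ) * ((v i : ℝ) * e1 g i) := by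
        intro i; rw [hZ'def]; ring
      rw [Finset.sum_congr rfl fun i _ => hterm i, Finset.sum_sub_distrib,
        ← Finset.mul_sum, sum_e1 hg (fun i => ((v i : ℝ)))]
    rw [thetaTerm, thetaTerm, quadKJ, quadJ, hdot, ext_zero hg]
    ring
  -- facts about m
  set P : ℕ → Finset (Fin g) := fun k =>
    Finset.univ.filter fun j => ((j : ℕ) : ℤ) < r ∧ k ≤ ((s j : Fin g) : ℕ) with hP
  have hmP : ∀ k : ℕ, extI g m k = ((P k).card : ℤ) := by
    intro k
    rw [extI]
    split_ifs with h
    · rw [hm]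
    · rw [hP]
      symm
      norm_num
      intro j _
      exact lt_of_lt_of_le (s j).isLt (le_of_not_gt h)
  have hm0 : extI g m 0 = r := by
    rw [hmP]
    have h1 : P 0 = Finset.univ.filter fun j : Fin g => (j : ℕ) < r.toNat := by
      rw [hP]
      refine Finset.filter_congr fun j _ => ?_
      simp only [Nat.zero_le, and_true]
      exact Int.lt_toNat.symm
    rw [h1, card_filter_lt (Int.toNat_le.2 hrg)]
    omega
  have hsub : ∀ k, P (k+1) ⊆ P k := by
    intro k j hj
    simp only [hP, Finset.mem_filter, Finset.mem_univ, true_and] at hj ⊢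
    exact ⟨hj.1, by omega⟩
  have hsd : ∀ k, (P k \ P (k+1)).card ≤ 1 := by
    intro k
    rw [Finset.card_le_one]
    intro a ha b hb
    simp only [hP, Finset.mem_sdiff, Finset.mem_filter, Finset.mem_univ, true_and,
      not_and, not_le] at ha hb
    have hsa : ((s a : Fin g) : ℕ) = k := by
      have := ha.2 ha.1.1
      omega
    have hsb : ((s b : Fin g) : ℕ) = k := by
      have := hb.2 hb.1.1
      omega
    exact s.injective (Fin.ext (hsa.trans hsb.symm))
  have hdiff : ∀ k, extI g m k - extI g m (k+1) = 0 ∨ extI g m k - extI g m (k+1) = 1 := by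
    intro k
    have hcap := Finset.card_sdiff_add_card_eq_card (hsub k)
    have hle := Finset.card_le_card (hsub k)
    have h1 := hsd k
    rw [hmP, hmP]
    omega
  set xm : Fin g → ℝ := fun i => ((m i : ℝ)) with hxm
  have hx0m : ext g xm 0 = ((r : ℤ) : ℝ) := by
    rw [hxm, ext_intCast m 0, hm0]
  have hqm : (ext g xm 0)^2 + ∑ j ∈ Finset.range g, (ext g xm j - ext g xm (j+1))^2
      = ((r:ℤ):ℝ)^2 + ((r:ℤ):ℝ) := by
    have hsq : ∀ j ∈ Finset.range g,
        (ext g xm j - ext g xm (j+1))^2 = ext g xm j - ext g xm (j+1) := by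
      intro j _
      have hcast : ext g xm j - ext g xm (j+1)
          = ((extI g m j - extI g m (j+1) : ℤ) : ℝ) := by
        rw [hxm, ext_intCast, ext_intCast]; push_cast; ring
      rcases hdiff j with h | h <;> rw [hcast, h] <;> norm_num
    rw [Finset.sum_congr rfl hsq, Finset.sum_range_sub' (ext g xm) g,
      ext_ge xm le_rfl, hx0m]
    ring
  -- conclude via IsLeast
  have hthet : theta g (Kmat g C + δ • Jmat g) Z'
      = sInf (Set.range fun v : Fin g → ℤ =>
          thetaTerm g (Kmat g C + δ • Jmat g) v Z') := rfl
  rw [hthet]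
  refine IsLeast.csInf_eq ⟨⟨m, rfl⟩, ?_⟩
  rintro y ⟨n, rfl⟩
  show thetaTerm g (Kmat g C + δ • Jmat g) m Z' ≤ thetaTerm g (Kmat g C + δ • Jmat g) n Z'
  rw [hid n, hid m]
  have hF : thetaTerm g (Kmat g C) m Z ≤ thetaTerm g (Kmat g C) n Z :=
    thetaTerm_mono hC hZ n
  set xn : Fin g → ℝ := fun i => ((n i : ℝ)) with hxn
  have hJn := J_lower (g := g) n
  rw [← hxn] at hJn
  have hxa : ext g xn 0 = ((extI g n 0 : ℤ) : ℝ) := by rw [hxn, ext_intCast]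
  have hcons : (0:ℝ) ≤ (((extI g n 0 : ℤ):ℝ) - ((r':ℤ):ℝ))
      * ((((extI g n 0 : ℤ):ℝ) - ((r':ℤ):ℝ)) + 1) := by
    have := consec_nonneg (extI g n 0 - r')
    push_cast at this
    convert this using 2
  have hzero : (((r:ℤ):ℝ) - ((r':ℤ):ℝ)) * ((((r:ℤ):ℝ) - ((r':ℤ):ℝ)) + 1) = 0 := by
    rcases hr with h | h <;> subst h <;> push_cast <;> ring
  have hq1 : 0 ≤ δ * (((ext g xn 0)^2
      + ∑ j ∈ Finset.range g, (ext g xn j - ext g xn (j+1))^2)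
      - ((ext g xn 0)^2 + ext g xn 0)) := mul_nonneg hδ.le (by linarith)
  have hq2 : 0 ≤ δ * ((((extI g n 0 : ℤ):ℝ) - ((r':ℤ):ℝ))
      * ((((extI g n 0 : ℤ):ℝ) - ((r':ℤ):ℝ)) + 1)) := mul_nonneg hδ.le hcons
  rw [hqm, hx0m, hxa]
  nlinarith [hq1, hq2, hzero, hF, hδ.le]
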